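/- arXiv:1802.01302 — 4 statements merged into one kernel-verified Lean document; each statement's English description precedes it below -/
import Mathlib

section
/- For every s > 0, average-case L₂-approximation with Gaussian kernels is (s,1)-weakly tractable if and only if it is weakly tractable, if and only if lim_{j→∞} γ_j² = 0. -/
open Filter

/-- `omegaOf x` is `ω` for shape parameter squared `x = γ²`:
`ω = 2γ²/(1+2γ²+√(1+4γ²))`. -/
noncomputable def omegaOf (x : ℝ) : ℝ := 2 * x / (1 + 2 * x + Real.sqrt (1 + 4 * x))

/-- Eigenvalues `λ_d(j) = ∏_{k=1}^d (1-ω_k) ω_k^{j_k}`, where `g k = γ_{k+1}²`. -/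
noncomputable def eigen (g : ℕ → ℝ) (d : ℕ) (j : Fin d → ℕ) : ℝ :=
  ∏ k : Fin d, (1 - omegaOf (g (k : ℕ))) * omegaOf (g (k : ℕ)) ^ (j k)

/-- The information complexity `n(ε,d)`: the least `n` such that some finite set `S` of
multi-indices with `|S| ≤ n` satisfies `∑_{j ∉ S} λ_d(j) ≤ ε²`. -/
noncomputable def infoComp (g : ℕ → ℝ) (ε : ℝ) (d : ℕ) : ℕ :=
  sInf {n : ℕ | ∃ S : Finset (Fin d → ℕ), S.card ≤ n ∧
    (∑' j : {j : Fin d → ℕ // j ∉ S}, eigen g d j.1) ≤ ε ^ 2}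

/-- `(s,t)`-weak tractability: `lim_{ε⁻¹+d→∞} ln n(ε,d) / (ε^{-s} + d^t) = 0`. -/
def WeakTract (g : ℕ → ℝ) (s t : ℝ) : Prop :=
  ∀ η : ℝ, 0 < η → ∃ M : ℝ, ∀ (d : ℕ) (ε : ℝ), 1 ≤ d → 0 < ε → ε < 1 →
    M ≤ ε⁻¹ + d → Real.log (infoComp g ε d : ℝ) ≤ η * (ε ^ (-s) + (d : ℝ) ^ t)


lemma geomPi (d : ℕ) (a r : Fin d → ℝ) (ha : ∀ k, 0 ≤ a k) (hr0 : ∀ k, 0 ≤ r k)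
    (hr1 : ∀ k, r k < 1) :
    Summable (fun j : Fin d → ℕ => ∏ k, a k * r k ^ j k) ∧
    ∑' j : Fin d → ℕ, ∏ k, a k * r k ^ j k = ∏ k, a k / (1 - r k) := by
  induction d with
  | zero =>
      constructor
      · exact (summable_of_finite_support (Set.toFinite _))
      · rw [tsum_eq_single (fun _ => 0) (by intro j hj; exact absurd (Subsingleton.elim j _) hj)]
        simp
  | succ d ih =>
      obtain ⟨ihs, iht⟩ := ih (fun k => a k.succ) (fun k => r k.succ)
        (fun k => ha _) (fun k => hr0 _) (fun k => hr1 _)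
      have hgs : Summable (fun n : ℕ => a 0 * r 0 ^ n) :=
        (summable_geometric_of_lt_one (hr0 0) (hr1 0)).mul_left _
      have hgt : ∑' n : ℕ, a 0 * r 0 ^ n = a 0 / (1 - r 0) := by
        rw [tsum_mul_left, tsum_geometric_of_lt_one (hr0 0) (hr1 0), div_eq_mul_inv]
      have hfs : Summable (fun p : ℕ × (Fin d → ℕ) =>
          (a 0 * r 0 ^ p.1) * ∏ k : Fin d, a k.succ * r k.succ ^ p.2 k) :=
        summable_mul_of_summable_norm (f := fun n : ℕ => a 0 * r 0 ^ n)
          (g := fun j : Fin d → ℕ => ∏ k : Fin d, a k.succ * r k.succ ^ j k)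
          (summable_norm_iff.mpr hgs) (summable_norm_iff.mpr ihs)
      have hft : ∑' p : ℕ × (Fin d → ℕ),
            ((a 0 * r 0 ^ p.1) * ∏ k : Fin d, a k.succ * r k.succ ^ p.2 k)
          = (a 0 / (1 - r 0)) * ∏ k : Fin d, a k.succ / (1 - r k.succ) := by
        rw [← tsum_mul_tsum_of_summable_norm (f := fun n : ℕ => a 0 * r 0 ^ n)
          (g := fun j : Fin d → ℕ => ∏ k : Fin d, a k.succ * r k.succ ^ j k)
          (summable_norm_iff.mpr hgs) (summable_norm_iff.mpr ihs), hgt, iht]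
      have hcomp : ∀ p : ℕ × (Fin d → ℕ),
          (∏ k, a k * r k ^ (Fin.consEquiv (fun _ => ℕ) p) k) =
          (a 0 * r 0 ^ p.1) * ∏ k : Fin d, a k.succ * r k.succ ^ p.2 k := by
        intro p
        rw [Fin.prod_univ_succ]
        simp
      constructor
      · rw [← (Fin.consEquiv (fun _ => ℕ)).summable_iff]
        exact hfs.congr fun p => (hcomp p).symm
      · rw [← (Fin.consEquiv (fun _ => ℕ)).tsum_eq, tsum_congr hcomp, hft, Fin.prod_univ_succ]

lemma omega_den_pos {x : ℝ} (hx : 0 < x) : 0 < 1 + 2 * x + Real.sqrt (1 + 4 * x) := by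
  have := Real.sqrt_nonneg (1 + 4 * x); nlinarith

lemma omega_pos {x : ℝ} (hx : 0 < x) : 0 < omegaOf x :=
  div_pos (by linarith) (omega_den_pos hx)

lemma omega_lt_one {x : ℝ} (hx : 0 < x) : omegaOf x < 1 := by
  rw [omegaOf, div_lt_one (omega_den_pos hx)]
  have := Real.sqrt_nonneg (1 + 4 * x); linarith

lemma omega_le_two_mul {x : ℝ} (hx : 0 < x) : omegaOf x ≤ 2 * x := by
  rw [omegaOf]
  have h1 : (1:ℝ) ≤ 1 + 2 * x + Real.sqrt (1 + 4 * x) := by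
    have := Real.sqrt_nonneg (1 + 4 * x); linarith
  calc 2 * x / (1 + 2 * x + Real.sqrt (1 + 4 * x)) ≤ 2 * x / 1 := by
        apply div_le_div_of_nonneg_left (by linarith) one_pos h1
  _ = 2 * x := div_one _

lemma omega_mono_lb {c x X : ℝ} (hc : 0 < c) (hcx : c ≤ x) (hxX : x ≤ X) :
    2 * c / (1 + 2 * X + Real.sqrt (1 + 4 * X)) ≤ omegaOf x := by
  have hx : 0 < x := lt_of_lt_of_le hc hcx
  have hX : 0 < X := lt_of_lt_of_le hx hxX
  rw [omegaOf]
  apply div_le_div₀ (by linarith) (by linarith) (omega_den_pos hx)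
  have : Real.sqrt (1 + 4 * x) ≤ Real.sqrt (1 + 4 * X) := Real.sqrt_le_sqrt (by linarith)
  linarith

section
variable {g : ℕ → ℝ} (hpos : ∀ j, 0 < g j)
include hpos

lemma eigen_summable (d : ℕ) : Summable (eigen g d) :=
  (geomPi d _ _ (fun k => by have := omega_lt_one (hpos (k:ℕ)); show (0:ℝ) ≤ 1 - omegaOf (g (k:ℕ)); linarith)
    (fun k => (omega_pos (hpos k)).le) (fun k => omega_lt_one (hpos k))).1

lemma eigen_tsum (d : ℕ) : ∑' j : Fin d → ℕ, eigen g d j = 1 := by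
  have h := (geomPi d (fun k : Fin d => 1 - omegaOf (g k)) (fun k : Fin d => omegaOf (g k))
    (fun k => by have := omega_lt_one (hpos (k:ℕ)); show (0:ℝ) ≤ 1 - omegaOf (g (k:ℕ)); linarith)
    (fun k => (omega_pos (hpos k)).le) (fun k => omega_lt_one (hpos k))).2
  calc (∑' j : Fin d → ℕ, eigen g d j)
      = ∏ k : Fin d, (1 - omegaOf (g (k:ℕ))) / (1 - omegaOf (g (k:ℕ))) := h
  _ = 1 := by
      apply Finset.prod_eq_one
      intro k _
      have := omega_lt_one (hpos k)
      exact div_self (ne_of_gt (by linarith))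

lemma eigen_pos (d : ℕ) (j : Fin d → ℕ) : 0 < eigen g d j := by
  apply Finset.prod_pos
  intro k _
  have h1 := omega_pos (hpos k)
  have h2 := omega_lt_one (hpos k)
  exact mul_pos (by linarith) (pow_pos h1 _)

lemma eigen_rpow (d : ℕ) (j : Fin d → ℕ) {τ : ℝ} (hτ : 0 < τ) :
    eigen g d j ^ τ =
    ∏ k : Fin d, (1 - omegaOf (g k)) ^ τ * (omegaOf (g k) ^ τ) ^ (j k) := by
  rw [eigen, ← Real.finset_prod_rpow _ _ (fun k _ => by
    have h1 := omega_pos (hpos (k:ℕ)); have h2 := omega_lt_one (hpos (k:ℕ))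
    exact le_of_lt (mul_pos (by linarith) (pow_pos h1 _)))]
  apply Finset.prod_congr rfl
  intro k _
  have h1 := omega_pos (hpos k)
  have h2 := omega_lt_one (hpos k)
  rw [Real.mul_rpow (by linarith) (by positivity), ← Real.rpow_natCast (omegaOf (g k)) (j k),
    ← Real.rpow_mul h1.le, mul_comm ((j k : ℕ) : ℝ) τ, Real.rpow_mul h1.le, Real.rpow_natCast]

lemma eigen_rpow_summable (d : ℕ) {τ : ℝ} (hτ : 0 < τ) :
    Summable (fun j : Fin d → ℕ => eigen g d j ^ τ) ∧
    ∑' j : Fin d → ℕ, eigen g d j ^ τ =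
      ∏ k : Fin d, (1 - omegaOf (g k)) ^ τ / (1 - omegaOf (g k) ^ τ) := by
  have h := geomPi d (fun k : Fin d => (1 - omegaOf (g k)) ^ τ)
    (fun k : Fin d => omegaOf (g k) ^ τ)
    (fun k => Real.rpow_nonneg (by have := omega_lt_one (hpos k); linarith) _)
    (fun k => Real.rpow_nonneg (omega_pos (hpos k)).le _)
    (fun k => Real.rpow_lt_one (omega_pos (hpos k)).le (omega_lt_one (hpos k)) hτ)
  constructor
  · exact h.1.congr fun j => (eigen_rpow hpos d j hτ).symm
  · rw [tsum_congr (fun j => eigen_rpow hpos d j hτ), h.2]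
end

lemma infoComp_log_le {g : ℕ → ℝ} (hpos : ∀ j, 0 < g j) (d : ℕ) {ε τ : ℝ} (hε0 : 0 < ε) (hε1 : ε < 1)
    (hτ0 : 0 < τ) (hτ1 : τ < 1) :
    Real.log (infoComp g ε d : ℝ) ≤
      (1 - τ)⁻¹ *
        Real.log (∏ k : Fin d, (1 - omegaOf (g (k : ℕ))) ^ τ / (1 - omegaOf (g (k : ℕ)) ^ τ))
      + (2 * τ / (1 - τ)) * Real.log ε⁻¹ := by
  have hω0 : ∀ k : ℕ, 0 < omegaOf (g k) := fun k => omega_pos (hpos k)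
  have hω1 : ∀ k : ℕ, omegaOf (g k) < 1 := fun k => omega_lt_one (hpos k)
  set M : ℝ := ∏ k : Fin d, (1 - omegaOf (g (k : ℕ))) ^ τ / (1 - omegaOf (g (k : ℕ)) ^ τ)
    with hMdef
  obtain ⟨hτsum, hτtsum⟩ := eigen_rpow_summable hpos d hτ0
  have hesum := eigen_summable hpos d
  -- each factor of M is ≥ 1
  have hfac : ∀ k : Fin d, 1 ≤ (1 - omegaOf (g (k : ℕ))) ^ τ / (1 - omegaOf (g (k : ℕ)) ^ τ) := by
    intro k
    set w := omegaOf (g (k : ℕ)) with hw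
    have h0 := hω0 (k : ℕ); have h1 := hω1 (k : ℕ)
    have hwτ : w ^ τ < 1 := Real.rpow_lt_one h0.le h1 hτ0
    have hge : w ≤ w ^ τ := by
      have := Real.rpow_le_rpow_of_exponent_ge h0 h1.le hτ1.le
      rwa [Real.rpow_one] at this
    have hge' : (1 - w : ℝ) ≤ (1 - w) ^ τ := by
      have := Real.rpow_le_rpow_of_exponent_ge (by linarith : (0:ℝ) < 1 - w)
        (by linarith : (1 - w : ℝ) ≤ 1) hτ1.le
      rwa [Real.rpow_one] at this
    rw [le_div_iff₀ (by linarith : (0:ℝ) < 1 - w ^ τ), one_mul]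
    linarith
  have hM1 : 1 ≤ M := by
    rw [hMdef]
    calc (1:ℝ) = ∏ _k : Fin d, 1 := by simp
    _ ≤ _ := Finset.prod_le_prod (fun _ _ => zero_le_one) (fun k _ => hfac k)
  have hM0 : 0 < M := lt_of_lt_of_le one_pos hM1
  -- threshold T
  have hbase0 : 0 < ε ^ 2 / M := div_pos (by positivity) hM0
  have hbase1 : ε ^ 2 / M ≤ 1 := by
    rw [div_le_one hM0]
    nlinarith
  set T : ℝ := (ε ^ 2 / M) ^ ((1 - τ)⁻¹ : ℝ) with hTdef
  have hT0 : 0 < T := Real.rpow_pos_of_pos hbase0 _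
  have hT1 : T ≤ 1 := Real.rpow_le_one hbase0.le hbase1 (inv_nonneg.mpr (by linarith))
  have hTpow : T ^ (1 - τ) = ε ^ 2 / M := by
    rw [hTdef, ← Real.rpow_mul hbase0.le, inv_mul_cancel₀ (by linarith : (1:ℝ) - τ ≠ 0),
      Real.rpow_one]
  -- the finite set S of large eigenvalues
  have hfin : {j : Fin d → ℕ | T < eigen g d j}.Finite := by
    have hcof : Tendsto (eigen g d) cofinite (nhds 0) := hesum.tendsto_cofinite_zero
    have hev : ∀ᶠ j in (cofinite : Filter (Fin d → ℕ)), eigen g d j < T :=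
      hcof.eventually_lt_const hT0
    have := Filter.eventually_cofinite.mp hev
    exact this.subset fun j hj => by
      simp only [Set.mem_setOf_eq] at *
      exact not_lt.mpr hj.le
  set S : Finset (Fin d → ℕ) := hfin.toFinset with hSdef
  have hmem : ∀ j, j ∈ S ↔ T < eigen g d j := fun j => hfin.mem_toFinset
  -- cardinality bound
  have hcard : (S.card : ℝ) ≤ M * T ^ (-τ) := by
    have hTτ : 0 < T ^ τ := Real.rpow_pos_of_pos hT0 τ
    have h1 : (S.card : ℝ) * T ^ τ ≤ ∑ j ∈ S, eigen g d j ^ τ := by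
      have := Finset.sum_le_sum (f := fun _ : Fin d → ℕ => T ^ τ)
        (g := fun j => eigen g d j ^ τ) (s := S)
        (fun j hj => Real.rpow_le_rpow hT0.le ((hmem j).mp hj).le hτ0.le)
      simpa [mul_comm] using this
    have h2 : ∑ j ∈ S, eigen g d j ^ τ ≤ M := by
      rw [hMdef, ← hτtsum]
      exact Summable.sum_le_tsum S (fun j _ => Real.rpow_nonneg (eigen_pos hpos d j).le τ) hτsum
    rw [Real.rpow_neg hT0.le, ← div_eq_mul_inv, le_div_iff₀ hTτ]
    linarith
  -- tail bound
  have htail : (∑' j : {j : Fin d → ℕ // j ∉ S}, eigen g d j.1) ≤ ε ^ 2 := by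
    have hsub : Summable (fun j : {j : Fin d → ℕ // j ∉ S} => eigen g d j.1) :=
      hesum.subtype _
    have hsubτ : Summable (fun j : {j : Fin d → ℕ // j ∉ S} => eigen g d j.1 ^ τ) :=
      hτsum.subtype _
    have hstep : ∀ j : {j : Fin d → ℕ // j ∉ S},
        eigen g d j.1 ≤ eigen g d j.1 ^ τ * T ^ (1 - τ) := by
      rintro ⟨j, hj⟩
      have hjT : eigen g d j ≤ T := not_lt.mp (fun h => hj ((hmem j).mpr h))
      have hpos' := eigen_pos hpos d j
      calc eigen g d j = eigen g d j ^ τ * eigen g d j ^ (1 - τ) := by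
            rw [← Real.rpow_add hpos', add_sub_cancel, Real.rpow_one]
      _ ≤ eigen g d j ^ τ * T ^ (1 - τ) := by
            apply mul_le_mul_of_nonneg_left _ (Real.rpow_nonneg hpos'.le τ)
            exact Real.rpow_le_rpow hpos'.le hjT (by linarith)
    have h3 : (∑' j : {j : Fin d → ℕ // j ∉ S}, eigen g d j.1)
        ≤ ∑' j : {j : Fin d → ℕ // j ∉ S}, eigen g d j.1 ^ τ * T ^ (1 - τ) :=
      Summable.tsum_le_tsum hstep hsub (hsubτ.mul_right _)
    have h4 : (∑' j : {j : Fin d → ℕ // j ∉ S}, eigen g d j.1 ^ τ * T ^ (1 - τ))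
        = (∑' j : {j : Fin d → ℕ // j ∉ S}, eigen g d j.1 ^ τ) * T ^ (1 - τ) :=
      tsum_mul_right
    have h5 : (∑' j : {j : Fin d → ℕ // j ∉ S}, eigen g d j.1 ^ τ) ≤ M := by
      have hsplit := Summable.sum_add_tsum_subtype_compl hτsum S
      rw [hτtsum, ← hMdef] at hsplit
      have hnn : 0 ≤ ∑ j ∈ S, eigen g d j ^ τ :=
        Finset.sum_nonneg fun j _ => Real.rpow_nonneg (eigen_pos hpos d j).le τ
      linarith
    have hTnn : (0:ℝ) ≤ T ^ (1 - τ) := Real.rpow_nonneg hT0.le _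
    calc (∑' j : {j : Fin d → ℕ // j ∉ S}, eigen g d j.1)
        ≤ (∑' j : {j : Fin d → ℕ // j ∉ S}, eigen g d j.1 ^ τ) * T ^ (1 - τ) := by
          rw [← h4]; exact h3
    _ ≤ M * T ^ (1 - τ) := mul_le_mul_of_nonneg_right h5 hTnn
    _ = ε ^ 2 := by rw [hTpow]; field_simp
  -- infoComp bound
  have hic : infoComp g ε d ≤ S.card := Nat.sInf_le ⟨S, le_refl _, htail⟩
  have hicR : (infoComp g ε d : ℝ) ≤ M * T ^ (-τ) :=
    le_trans (Nat.cast_le.mpr hic) hcard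
  -- take logs
  have hRHS : Real.log (M * T ^ (-τ)) =
      (1 - τ)⁻¹ * Real.log M + (2 * τ / (1 - τ)) * Real.log ε⁻¹ := by
    have hTne : T ≠ 0 := ne_of_gt hT0
    have hMne : M ≠ 0 := ne_of_gt hM0
    rw [Real.log_mul hMne (by positivity), Real.log_rpow hT0, hTdef,
      Real.log_rpow hbase0, Real.log_div (by positivity) hMne, Real.log_pow,
      Real.log_inv]
    have hne : (1:ℝ) - τ ≠ 0 := by linarith
    field_simp
    ring
  rw [← hRHS]
  rcases Nat.eq_zero_or_pos (infoComp g ε d) with h0 | hpos'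
  · rw [h0]
    simp only [Nat.cast_zero, Real.log_zero]
    rw [hRHS]
    have hlM : 0 ≤ Real.log M := Real.log_nonneg hM1
    have hlε : 0 ≤ Real.log ε⁻¹ := Real.log_nonneg (one_le_inv_iff₀.mpr ⟨hε0, hε1.le⟩)
    have c1 : (0:ℝ) ≤ (1 - τ)⁻¹ := inv_nonneg.mpr (by linarith)
    have c2 : (0:ℝ) ≤ 2 * τ / (1 - τ) := div_nonneg (by linarith) (by linarith)
    have := mul_nonneg c1 hlM
    have := mul_nonneg c2 hlε
    linarith
  · exact Real.log_le_log (by exact_mod_cast hpos') hicR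

set_option maxHeartbeats 2000000 in
lemma fwd {g : ℕ → ℝ} (hpos : ∀ j, 0 < g j) (h0 : Tendsto g atTop (nhds 0))
    {s : ℝ} (hs : 0 < s) : WeakTract g s 1 := by
  intro η hη
  have hω0 : ∀ k : ℕ, 0 < omegaOf (g k) := fun k => omega_pos (hpos k)
  have hω1 : ∀ k : ℕ, omegaOf (g k) < 1 := fun k => omega_lt_one (hpos k)
  obtain ⟨τ, hτ0, hτh, hτs⟩ : ∃ τ : ℝ, 0 < τ ∧ τ ≤ 1/2 ∧ τ ≤ η * s / 16 :=
    ⟨min (1/2) (η * s / 16), lt_min (by norm_num) (by positivity),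
      min_le_left _ _, min_le_right _ _⟩
  have hτ1 : τ < 1 := lt_of_le_of_lt hτh (by norm_num)
  obtain ⟨δ, hδ0, hδ1, hδe⟩ : ∃ δ : ℝ, 0 < δ ∧ δ < 1 ∧ Real.exp (-(η / 8)) = 1 - δ := by
    refine ⟨1 - Real.exp (-(η / 8)), ?_, ?_, by ring⟩
    · have : Real.exp (-(η / 8)) < 1 := Real.exp_lt_one_iff.mpr (by linarith)
      linarith
    · have := Real.exp_pos (-(η / 8)); linarith
  -- eventually ω_k^τ ≤ δ
  set x0 : ℝ := δ ^ (1/τ : ℝ) with hx0def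
  have hx00 : 0 < x0 := Real.rpow_pos_of_pos hδ0 _
  obtain ⟨K, hK⟩ : ∃ K : ℕ, ∀ k ≥ K, g k < x0 / 2 :=
    eventually_atTop.mp (h0.eventually_lt_const (by positivity))
  have hωδ : ∀ k ≥ K, omegaOf (g k) ^ (τ:ℝ) ≤ δ := by
    intro k hk
    have h1 : omegaOf (g k) ≤ x0 :=
      le_trans (omega_le_two_mul (hpos k)) (by have := hK k hk; linarith)
    calc omegaOf (g k) ^ (τ:ℝ) ≤ x0 ^ (τ:ℝ) :=
          Real.rpow_le_rpow (hω0 k).le h1 hτ0.le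
    _ = δ := by
        rw [hx0def, ← Real.rpow_mul hδ0.le, one_div,
          inv_mul_cancel₀ (ne_of_gt hτ0), Real.rpow_one]
  -- the nonnegative per-coordinate log terms
  set f : ℕ → ℝ := fun k => -Real.log (1 - omegaOf (g k) ^ (τ:ℝ)) with hfdef
  have hωτ1 : ∀ k : ℕ, omegaOf (g k) ^ (τ:ℝ) < 1 :=
    fun k => Real.rpow_lt_one (hω0 k).le (hω1 k) hτ0
  have hωτ0 : ∀ k : ℕ, 0 < omegaOf (g k) ^ (τ:ℝ) :=
    fun k => Real.rpow_pos_of_pos (hω0 k) _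
  have hfnn : ∀ k : ℕ, 0 ≤ f k := by
    intro k
    have h1 := hωτ1 k; have h2 := hωτ0 k
    have := Real.log_nonpos (show (0:ℝ) ≤ 1 - omegaOf (g k) ^ (τ:ℝ) by linarith)
      (show (1:ℝ) - omegaOf (g k) ^ (τ:ℝ) ≤ 1 by linarith)
    simp only [hfdef]; linarith
  have hfsmall : ∀ k ≥ K, f k ≤ η / 8 := by
    intro k hk
    have h1 : Real.exp (-(η/8)) ≤ 1 - omegaOf (g k) ^ (τ:ℝ) := by
      have := hωδ k hk; rw [hδe]; linarith
    have h2 := Real.log_le_log (Real.exp_pos _) h1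
    rw [Real.log_exp] at h2
    simp only [hfdef]; linarith
  set C0 : ℝ := ∑ k ∈ Finset.range K, f k with hC0def
  have hC0nn : 0 ≤ C0 := Finset.sum_nonneg fun k _ => hfnn k
  -- bound on log of the product M_τ(d)
  have hlogM : ∀ d : ℕ,
      Real.log (∏ k : Fin d, (1 - omegaOf (g (k : ℕ))) ^ (τ:ℝ)
        / (1 - omegaOf (g (k : ℕ)) ^ (τ:ℝ))) ≤ C0 + (η / 8) * d := by
    intro d
    have hne : ∀ k : Fin d, (1 - omegaOf (g (k : ℕ))) ^ (τ:ℝ)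
        / (1 - omegaOf (g (k : ℕ)) ^ (τ:ℝ)) ≠ 0 := by
      intro k
      have h1 := hω1 (k : ℕ); have h2 := hωτ1 (k : ℕ); have h3 := hω0 (k : ℕ)
      have h5 : (0:ℝ) < (1 - omegaOf (g (k : ℕ))) ^ (τ:ℝ) := Real.rpow_pos_of_pos (by linarith) _
      exact ne_of_gt (div_pos h5 (by linarith))
    rw [Real.log_prod (fun k _ => hne k)]
    have hterm : ∀ k : Fin d, Real.log ((1 - omegaOf (g (k : ℕ))) ^ (τ:ℝ)
        / (1 - omegaOf (g (k : ℕ)) ^ (τ:ℝ))) ≤ f (k : ℕ) := by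
      intro k
      have h1 := hω1 (k : ℕ); have h2 := hωτ1 (k : ℕ); have h3 := hω0 (k : ℕ)
      have h4 := hωτ0 (k : ℕ)
      rw [Real.log_div (ne_of_gt (Real.rpow_pos_of_pos (by linarith) _)) (by linarith),
        Real.log_rpow (by linarith)]
      have h5 : Real.log (1 - omegaOf (g (k : ℕ))) ≤ 0 :=
        Real.log_nonpos (by linarith) (by linarith)
      have h6 : τ * Real.log (1 - omegaOf (g (k : ℕ))) ≤ 0 :=
        mul_nonpos_of_nonneg_of_nonpos hτ0.le h5
      simp only [hfdef]; linarith
    calc ∑ k : Fin d, Real.log ((1 - omegaOf (g (k : ℕ))) ^ (τ:ℝ)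
          / (1 - omegaOf (g (k : ℕ)) ^ (τ:ℝ)))
        ≤ ∑ k : Fin d, f (k : ℕ) := Finset.sum_le_sum fun k _ => hterm k
    _ = ∑ k ∈ Finset.range d, f k := Fin.sum_univ_eq_sum_range _ _
    _ ≤ ∑ k ∈ Finset.range d, ((if k < K then f k else 0) + η / 8) := by
        apply Finset.sum_le_sum
        intro k _
        by_cases hk : k < K
        · simp [hk]; linarith
        · simp [hk]
          exact hfsmall k (not_lt.mp hk)
    _ = (∑ k ∈ Finset.range d, (if k < K then f k else 0)) + (η / 8) * d := by
        rw [Finset.sum_add_distrib, Finset.sum_const, Finset.card_range,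
          nsmul_eq_mul, mul_comm]
    _ ≤ C0 + (η / 8) * d := by
        have : (∑ k ∈ Finset.range d, (if k < K then f k else 0)) ≤ C0 := by
          rw [← Finset.sum_filter]
          apply Finset.sum_le_sum_of_subset_of_nonneg
          · intro k hk
            simp only [Finset.mem_filter, Finset.mem_range] at hk ⊢
            exact hk.2
          · intro k _ _; exact hfnn k
        linarith
  -- choose the cutoff M
  obtain ⟨B, hB1, hBC⟩ : ∃ B : ℝ, 1 ≤ B ∧ 4 * C0 / η ≤ B :=
    ⟨max 1 (4 * C0 / η), le_max_left _ _, le_max_right _ _⟩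
  have hB0 : 0 < B := lt_of_lt_of_le one_pos hB1
  refine ⟨2 * B + 2 * B ^ (1/s : ℝ), ?_⟩
  intro d ε hd hε0 hε1 hM
  have hBs : (1:ℝ) ≤ B ^ (1/s : ℝ) := Real.one_le_rpow hB1 (by positivity)
  -- main claim: ε^(-s) + d ≥ B
  have hkey : B ≤ ε ^ (-s : ℝ) + (d : ℝ) := by
    have hεs : (0:ℝ) ≤ ε ^ (-s : ℝ) := Real.rpow_nonneg hε0.le _
    by_cases hdB : B ≤ (d : ℝ)
    · linarith
    · push_neg at hdB
      have hεinv : B ^ (1/s : ℝ) ≤ ε⁻¹ := by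
        have : 2 * B + 2 * B ^ (1/s:ℝ) - (d:ℝ) ≤ ε⁻¹ := by linarith
        nlinarith [hBs, hB0]
      have : B ≤ ε ^ (-s : ℝ) := by
        have h1 : (B ^ (1/s:ℝ)) ^ (s:ℝ) ≤ ε⁻¹ ^ (s:ℝ) :=
          Real.rpow_le_rpow (by positivity) hεinv hs.le
        rw [← Real.rpow_mul hB0.le, one_div, inv_mul_cancel₀ (ne_of_gt hs),
          Real.rpow_one] at h1
        rwa [Real.rpow_neg hε0.le, ← Real.inv_rpow hε0.le]
      linarith
  -- assemble
  have hbound := infoComp_log_le hpos d hε0 hε1 hτ0 hτ1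
  have hMd := hlogM d
  have hinv2 : (1 - τ)⁻¹ ≤ 2 := by
    rw [inv_le_comm₀ (by linarith) (by norm_num)]
    linarith
  have hlogMnn : (0:ℝ) ≤ C0 + (η / 8) * d := by positivity
  have hlogε : Real.log ε⁻¹ ≤ ε ^ (-s : ℝ) / s := by
    have hx : (0:ℝ) < ε⁻¹ := by positivity
    have h1 : Real.log (ε⁻¹ ^ (s:ℝ)) ≤ ε⁻¹ ^ (s:ℝ) - 1 :=
      Real.log_le_sub_one_of_pos (Real.rpow_pos_of_pos hx _)
    rw [Real.log_rpow hx] at h1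
    have h2 : ε⁻¹ ^ (s:ℝ) = ε ^ (-s : ℝ) := by
      rw [Real.rpow_neg hε0.le, ← Real.inv_rpow hε0.le]
    rw [h2] at h1
    rw [div_eq_mul_inv, ← h2]
    have : s * Real.log ε⁻¹ ≤ ε⁻¹ ^ (s:ℝ) := by linarith [Real.rpow_pos_of_pos hx (s:ℝ)]
    calc Real.log ε⁻¹ = s * Real.log ε⁻¹ * s⁻¹ := by field_simp
    _ ≤ ε⁻¹ ^ (s:ℝ) * s⁻¹ := by
        apply mul_le_mul_of_nonneg_right this (by positivity)
  have hεsnn : (0:ℝ) ≤ ε ^ (-s : ℝ) := Real.rpow_nonneg hε0.le _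
  have hlogεnn : (0:ℝ) ≤ Real.log ε⁻¹ :=
    Real.log_nonneg (one_le_inv_iff₀.mpr ⟨hε0, hε1.le⟩)
  have step1 : Real.log (infoComp g ε d : ℝ) ≤ 2 * (C0 + (η/8) * d) + (4 * τ) * Real.log ε⁻¹ := by
    have t1 : (1 - τ)⁻¹ * Real.log (∏ k : Fin d, (1 - omegaOf (g (k : ℕ))) ^ (τ:ℝ)
        / (1 - omegaOf (g (k : ℕ)) ^ (τ:ℝ))) ≤ 2 * (C0 + (η/8) * d) := by
      rcases le_or_gt (Real.log (∏ k : Fin d, (1 - omegaOf (g (k : ℕ))) ^ (τ:ℝ)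
        / (1 - omegaOf (g (k : ℕ)) ^ (τ:ℝ)))) 0 with hneg | hpos'
      · have hinn : (0:ℝ) ≤ (1-τ)⁻¹ := inv_nonneg.mpr (by linarith)
        have := mul_nonpos_of_nonneg_of_nonpos hinn hneg
        linarith
      · have h8 := mul_le_mul_of_nonneg_right hinv2 hpos'.le
        have h9 := hMd
        nlinarith
    have t2 : (2 * τ / (1 - τ)) * Real.log ε⁻¹ ≤ (4 * τ) * Real.log ε⁻¹ := by
      apply mul_le_mul_of_nonneg_right _ hlogεnn
      rw [div_le_iff₀ (by linarith : (0:ℝ) < 1 - τ)]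
      nlinarith [hτ0, hτh]
    linarith
  have step2 : (4 * τ) * Real.log ε⁻¹ ≤ (η / 4) * ε ^ (-s : ℝ) := by
    calc (4 * τ) * Real.log ε⁻¹ ≤ (4 * (η * s / 16)) * Real.log ε⁻¹ := by
          apply mul_le_mul_of_nonneg_right _ hlogεnn; linarith
    _ = (η * s / 4) * Real.log ε⁻¹ := by ring
    _ ≤ (η * s / 4) * (ε ^ (-s:ℝ) / s) := by
          apply mul_le_mul_of_nonneg_left hlogε (by positivity)
    _ = (η / 4) * ε ^ (-s : ℝ) := by field_simp
  have step3 : 2 * C0 ≤ (η / 2) * (ε ^ (-s:ℝ) + d) := by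
    have h7 : 4 * C0 / η ≤ ε ^ (-s:ℝ) + d := le_trans hBC hkey
    rw [div_le_iff₀ hη] at h7
    nlinarith
  have hd1 : (d : ℝ) ^ (1:ℝ) = d := Real.rpow_one _
  rw [hd1]
  calc Real.log (infoComp g ε d : ℝ)
      ≤ 2 * (C0 + (η/8) * d) + (4 * τ) * Real.log ε⁻¹ := step1
  _ ≤ 2 * C0 + (η/4) * d + (η/4) * ε ^ (-s:ℝ) := by linarith
  _ ≤ (η/2) * (ε ^ (-s:ℝ) + d) + (η/4) * d + (η/4) * ε ^ (-s:ℝ) := by linarith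
  _ ≤ η * (ε ^ (-s:ℝ) + d) := by nlinarith

lemma bwd {g : ℕ → ℝ} (hpos : ∀ j, 0 < g j) (hanti : Antitone g)
    {s : ℝ} (hs : 0 < s) (hwt : WeakTract g s 1) : Tendsto g atTop (nhds 0) := by
  by_contra hnot
  -- the infimum c of g is positive
  have hbdd : BddBelow (Set.range g) := ⟨0, fun x ⟨j, hj⟩ => hj ▸ (hpos j).le⟩
  have htend : Tendsto g atTop (nhds (⨅ j, g j)) := tendsto_atTop_ciInf hanti hbdd
  have hc0 : 0 ≤ ⨅ j, g j := le_ciInf fun j => (hpos j).le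
  have hcpos : 0 < ⨅ j, g j := by
    rcases lt_or_eq_of_le hc0 with h | h
    · exact h
    · exact absurd (h ▸ htend) hnot
  set c : ℝ := ⨅ j, g j with hcdef
  have hgc : ∀ k, c ≤ g k := fun k => ciInf_le hbdd k
  -- uniform lower bound on ω
  set w : ℝ := 2 * c / (1 + 2 * g 0 + Real.sqrt (1 + 4 * g 0)) with hwdef
  have hw0 : 0 < w := div_pos (by linarith) (omega_den_pos (hpos 0))
  have hwle : ∀ k : ℕ, w ≤ omegaOf (g k) :=
    fun k => omega_mono_lb hcpos (hgc k) (hanti (Nat.zero_le k))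
  have hw1 : w < 1 := lt_of_le_of_lt (hwle 0) (omega_lt_one (hpos 0))
  -- each eigenvalue is at most (1-w)^d
  have heig_le : ∀ d : ℕ, ∀ j : Fin d → ℕ, eigen g d j ≤ (1 - w) ^ d := by
    intro d j
    rw [eigen]
    calc (∏ k : Fin d, (1 - omegaOf (g (k : ℕ))) * omegaOf (g (k : ℕ)) ^ (j k))
        ≤ ∏ _k : Fin d, (1 - w) := by
          apply Finset.prod_le_prod
          · intro k _
            have h1 := omega_pos (hpos (k : ℕ)); have h2 := omega_lt_one (hpos (k : ℕ))
            exact le_of_lt (mul_pos (by linarith) (pow_pos h1 _))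
          · intro k _
            have h1 := omega_pos (hpos (k : ℕ)); have h2 := omega_lt_one (hpos (k : ℕ))
            have h3 : omegaOf (g (k : ℕ)) ^ (j k) ≤ 1 :=
              pow_le_one₀ h1.le h2.le
            have h4 := hwle (k : ℕ)
            nlinarith
    _ = (1 - w) ^ d := by rw [Finset.prod_const, Finset.card_univ, Fintype.card_fin]
  -- lower bound for infoComp at ε = 1/2
  have hlb : ∀ d : ℕ, (3/4 : ℝ) ≤ (infoComp g (1/2) d : ℝ) * (1 - w) ^ d := by
    intro d
    -- the defining set is nonempty
    have hne : {n : ℕ | ∃ S : Finset (Fin d → ℕ), S.card ≤ n ∧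
        (∑' j : {j : Fin d → ℕ // j ∉ S}, eigen g d j.1) ≤ (1/2 : ℝ) ^ 2}.Nonempty := by
      have htt : Tendsto (fun S : Finset (Fin d → ℕ) =>
          ∑' j : {j : Fin d → ℕ // j ∉ S}, eigen g d j.1) atTop (nhds 0) :=
        tendsto_tsum_compl_atTop_zero (eigen g d)
      have hev : ∀ᶠ S in (atTop : Filter (Finset (Fin d → ℕ))),
          (∑' j : {j : Fin d → ℕ // j ∉ S}, eigen g d j.1) < (1/2 : ℝ) ^ 2 :=
        htt.eventually_lt_const (by norm_num)
      obtain ⟨S, hS⟩ := hev.exists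
      exact ⟨S.card, S, le_refl _, hS.le⟩
    have hmem := Nat.sInf_mem hne
    obtain ⟨S0, hcard, htail⟩ := hmem
    have hsplit := Summable.sum_add_tsum_subtype_compl (eigen_summable hpos d) S0
    rw [eigen_tsum hpos d] at hsplit
    have hsum_le : (∑ j ∈ S0, eigen g d j) ≤ (S0.card : ℝ) * (1 - w) ^ d := by
      calc (∑ j ∈ S0, eigen g d j) ≤ ∑ _j ∈ S0, (1 - w) ^ d :=
            Finset.sum_le_sum fun j _ => heig_le d j
      _ = (S0.card : ℝ) * (1 - w) ^ d := by rw [Finset.sum_const, nsmul_eq_mul]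
    have hcardR : (S0.card : ℝ) ≤ (infoComp g (1/2) d : ℝ) := by
      exact_mod_cast hcard
    have hwp : (0:ℝ) < (1 - w) ^ d := pow_pos (by linarith) d
    have : (1:ℝ) - (1/2)^2 ≤ (S0.card : ℝ) * (1 - w) ^ d := by linarith
    calc (3/4 : ℝ) = 1 - (1/2)^2 := by norm_num
    _ ≤ (S0.card : ℝ) * (1 - w) ^ d := this
    _ ≤ (infoComp g (1/2) d : ℝ) * (1 - w) ^ d :=
        mul_le_mul_of_nonneg_right hcardR hwp.le
  -- contradiction with weak tractability
  set L : ℝ := -Real.log (1 - w) with hLdef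
  have hL0 : 0 < L := by
    have := Real.log_neg (show (0:ℝ) < 1 - w by linarith) (show (1:ℝ) - w < 1 by linarith)
    simp only [hLdef]; linarith
  obtain ⟨M, hM⟩ := hwt (L/2) (by positivity)
  set A : ℝ := ((1:ℝ)/2) ^ (-s : ℝ) with hAdef
  have hA0 : (0:ℝ) ≤ A := Real.rpow_nonneg (by norm_num) _
  obtain ⟨d, hd1, hdM, hdbig⟩ : ∃ d : ℕ, 1 ≤ d ∧ M ≤ (1/2:ℝ)⁻¹ + d ∧
      A + 2 / L * (-Real.log (3/4)) + 1 < d := by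
    obtain ⟨d0, hd0⟩ := exists_nat_gt (max M (A + 2 / L * (-Real.log (3/4)) + 1))
    have h1 : M ≤ max M (A + 2 / L * (-Real.log (3/4)) + 1) := le_max_left _ _
    have h2 : A + 2 / L * (-Real.log (3/4)) + 1 ≤ max M (A + 2 / L * (-Real.log (3/4)) + 1) :=
      le_max_right _ _
    refine ⟨d0 + 1, Nat.le_add_left 1 d0, ?_, ?_⟩
    · push_cast
      have : (0:ℝ) < (1/2:ℝ)⁻¹ := by norm_num
      linarith
    · push_cast
      linarith
  have hub := hM d (1/2) hd1 (by norm_num) (by norm_num) hdM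
  rw [Real.rpow_one, ← hAdef] at hub
  set n : ℕ := infoComp g (1/2) d with hndef
  have hwp : (0:ℝ) < (1 - w) ^ d := pow_pos (by linarith) d
  have hn0 : (0:ℝ) < (n : ℝ) := by
    by_contra hcon
    push_neg at hcon
    have h3 := hlb d
    rw [← hndef] at h3
    nlinarith
  have hllb : Real.log (3/4) + d * L ≤ Real.log (n : ℝ) := by
    have h4 : (3/4 : ℝ) / (1 - w) ^ d ≤ (n : ℝ) := by
      rw [div_le_iff₀ hwp]
      have h3 := hlb d
      rw [← hndef] at h3
      exact h3
    have h5 : Real.log ((3/4 : ℝ) / (1 - w) ^ d) ≤ Real.log (n : ℝ) :=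
      Real.log_le_log (div_pos (by norm_num) hwp) h4
    rw [Real.log_div (by norm_num) (ne_of_gt hwp), Real.log_pow] at h5
    simp only [hLdef]
    push_cast at h5 ⊢
    linarith
  have hfin : L / 2 * (A + 2 / L * (-Real.log (3/4)) + 1) < L / 2 * d :=
    mul_lt_mul_of_pos_left hdbig (by positivity)
  have hsimp : L / 2 * (2 / L * (-Real.log (3/4))) = -Real.log (3/4) := by
    field_simp
  nlinarith [hub, hllb, hfin, hsimp, hL0]

/-- For every `s > 0`: `(s,1)`-WT ⟺ WT ⟺ `lim_j γ_j² = 0`. -/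
theorem stmt2 (s : ℝ) (hs : 0 < s)
    (g : ℕ → ℝ) (hpos : ∀ j, 0 < g j) (hanti : Antitone g) :
    (WeakTract g s 1 ↔ WeakTract g 1 1) ∧
    (WeakTract g 1 1 ↔ Filter.Tendsto g Filter.atTop (nhds 0)) := by
  refine ⟨⟨fun h => fwd hpos (bwd hpos hanti hs h) one_pos,
    fun h => fwd hpos (bwd hpos hanti one_pos h) hs⟩,
    ⟨bwd hpos hanti one_pos, fun h => fwd hpos h one_pos⟩⟩
end

section
/- Let γ = (γ_j²)_{j≥1} be a nonincreasing sequence of positive reals with r(γ) > 0, where r(γ) = sup{ δ > 0 : ∑_{j=1}^∞ γ_j^{2/δ} < ∞ }. Then r(γ) = liminf_{j→∞} (ln γ_j^{−2} / ln j). -/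
open Filter

/-- `r(γ) = sup{δ > 0 : ∑_j γ_j^{2/δ} < ∞}` as an extended real, where `g j = γ_{j+1}²`
(so `γ_j^{2/δ} = (g (j-1))^{1/δ}`). -/
noncomputable def rGamma (g : ℕ → ℝ) : EReal :=
  sSup {x : EReal | ∃ δ : ℝ, 0 < δ ∧ Summable (fun j : ℕ => g j ^ (1 / δ)) ∧ x = (δ : EReal)}

lemma aux_ratio_tendsto (c : ℝ) :
    Filter.Tendsto (fun m : ℕ => (Real.log m - c) / Real.log ((m : ℝ) + 1)) atTop (nhds 1) := by
  have hlog : Tendsto (fun m : ℕ => Real.log ((m : ℝ) + 1)) atTop atTop :=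
    Real.tendsto_log_atTop.comp (tendsto_atTop_add_const_right _ 1 tendsto_natCast_atTop_atTop)
  have hlow : Tendsto (fun m : ℕ => 1 - (1 + c) / Real.log ((m : ℝ) + 1)) atTop (nhds 1) := by
    have := (tendsto_const_nhds (x := (1 + c)) (f := atTop (α := ℕ))).div_atTop hlog
    simpa using (tendsto_const_nhds (x := (1:ℝ))).sub this
  have hup : Tendsto (fun m : ℕ => 1 - c / Real.log ((m : ℝ) + 1)) atTop (nhds 1) := by
    have := (tendsto_const_nhds (x := c) (f := atTop (α := ℕ))).div_atTop hlog
    simpa using (tendsto_const_nhds (x := (1:ℝ))).sub this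
  refine tendsto_of_tendsto_of_tendsto_of_le_of_le' hlow hup ?_ ?_
  · filter_upwards [eventually_ge_atTop 1] with m hm
    have hm1 : (1:ℝ) ≤ (m:ℝ) := by exact_mod_cast hm
    have hpos : 0 < Real.log ((m:ℝ) + 1) := Real.log_pos (by linarith)
    have hle : Real.log ((m:ℝ)+1) - 1 ≤ Real.log m := by
      have h1 : Real.log ((m:ℝ)+1) - Real.log m = Real.log (((m:ℝ)+1)/m) := by
        rw [Real.log_div (by linarith) (by linarith)]
      have h2 : Real.log (((m:ℝ)+1)/m) ≤ ((m:ℝ)+1)/m - 1 :=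
        Real.log_le_sub_one_of_pos (by positivity)
      have h3 : ((m:ℝ)+1)/m - 1 ≤ 1 := by
        rw [div_sub_one (by linarith), div_le_one (by linarith)]; linarith
      linarith
    have heq : 1 - (1+c)/Real.log ((m:ℝ)+1)
        = (Real.log ((m:ℝ)+1) - (1+c))/Real.log ((m:ℝ)+1) := by field_simp
    rw [heq]
    exact (div_le_div_iff_of_pos_right hpos).mpr (by linarith)
  · filter_upwards [eventually_ge_atTop 1] with m hm
    have hm1 : (1:ℝ) ≤ (m:ℝ) := by exact_mod_cast hm
    have hpos : 0 < Real.log ((m:ℝ) + 1) := Real.log_pos (by linarith)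
    have hle : Real.log m ≤ Real.log ((m:ℝ)+1) := Real.log_le_log (by linarith) (by linarith)
    have heq : 1 - c/Real.log ((m:ℝ)+1)
        = (Real.log ((m:ℝ)+1) - c)/Real.log ((m:ℝ)+1) := by field_simp
    rw [heq]
    exact (div_le_div_iff_of_pos_right hpos).mpr (by linarith)

/-- If `r(γ) > 0` then `r(γ) = liminf_{j→∞} ln γ_j⁻² / ln j`. -/
theorem stmt12 (g : ℕ → ℝ) (hpos : ∀ j, 0 < g j) (hanti : Antitone g)
    (hr : 0 < rGamma g) :
    rGamma g = Filter.liminf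
      (fun j : ℕ => ((Real.log (g j)⁻¹ / Real.log ((j : ℝ) + 1) : ℝ) : EReal))
      Filter.atTop := by
  set f : ℕ → EReal :=
    fun j : ℕ => ((Real.log (g j)⁻¹ / Real.log ((j : ℝ) + 1) : ℝ) : EReal) with hf
  apply le_antisymm
  · -- rGamma ≤ liminf
    apply sSup_le
    rintro x ⟨δ, hδ, hsum, rfl⟩
    set a : ℕ → ℝ := fun j => g j ^ (1/δ) with ha
    have hanonneg : ∀ j, 0 ≤ a j := fun j => Real.rpow_nonneg (hpos j).le _
    have haanti : Antitone a := fun i j hij =>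
      Real.rpow_le_rpow (hpos j).le (hanti hij) (by positivity)
    have key : ∀ n : ℕ, (n:ℝ) * a (2*n) ≤ ∑' k, a (k+n) := by
      intro n
      have h1 : (n:ℝ) * a (2*n) = ∑ _j ∈ Finset.range n, a (2*n) := by
        rw [Finset.sum_const, Finset.card_range, nsmul_eq_mul]
      rw [h1]
      have h2 : ∑ j ∈ Finset.range n, a (2*n) ≤ ∑ j ∈ Finset.range n, a (j+n) :=
        Finset.sum_le_sum fun j hj => haanti (by have := Finset.mem_range.1 hj; omega)
      exact h2.trans (Summable.sum_le_tsum (Finset.range n) (fun k _ => hanonneg _)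
        ((summable_nat_add_iff n).2 hsum))
    have htail : Tendsto (fun n : ℕ => ∑' k, a (k+n)) atTop (nhds 0) :=
      tendsto_sum_nat_add a
    obtain ⟨N, hN⟩ := eventually_atTop.1 (htail.eventually_lt_const one_pos)
    -- eventual bound for f
    have hev : ∀ᶠ m : ℕ in atTop,
        ((δ * ((Real.log m - Real.log 4) / Real.log ((m:ℝ)+1)) : ℝ) : EReal) ≤ f m := by
      filter_upwards [eventually_ge_atTop (2*N+2)] with m hm
      have hm2 : 2 ≤ m := by omega
      set n := m / 2 with hn
      have hnN : N ≤ n := by omega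
      have hn1 : 1 ≤ n := by omega
      have h2n : 2*n ≤ m := by omega
      have hm4n : m ≤ 4*n := by omega
      have hnR : (0:ℝ) < n := by exact_mod_cast hn1
      have hmR : (0:ℝ) < m := by positivity
      have h1 : a (2*n) ≤ 1/(n:ℝ) := by
        rw [le_div_iff₀ hnR]
        have := (key n).trans (hN n hnN).le
        linarith [this]
      have h2 : a m ≤ 4/(m:ℝ) := by
        refine (haanti h2n).trans (h1.trans ?_)
        rw [div_le_div_iff₀ hnR hmR]
        have : (m:ℝ) ≤ 4*(n:ℝ) := by exact_mod_cast hm4n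
        linarith
      have hgm : g m = a m ^ δ := by
        rw [ha]
        simp only
        rw [← Real.rpow_mul (hpos m).le, one_div_mul_cancel hδ.ne', Real.rpow_one]
      have hgle : g m ≤ (4/(m:ℝ)) ^ δ := by
        rw [hgm]
        exact Real.rpow_le_rpow (hanonneg m) h2 hδ.le
      have h4m : (0:ℝ) < 4/(m:ℝ) := by positivity
      have hloggm : Real.log (g m) ≤ δ * (Real.log 4 - Real.log m) := by
        calc Real.log (g m) ≤ Real.log ((4/(m:ℝ)) ^ δ) :=
              Real.log_le_log (hpos m) hgle
          _ = δ * Real.log (4/(m:ℝ)) := Real.log_rpow h4m δ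
          _ = δ * (Real.log 4 - Real.log m) := by
              rw [Real.log_div (by norm_num) hmR.ne']
      have hLpos : 0 < Real.log ((m:ℝ)+1) := by
        apply Real.log_pos
        have : (1:ℝ) ≤ (m:ℝ) := by exact_mod_cast (by omega : 1 ≤ m)
        linarith
      rw [hf]
      apply EReal.coe_le_coe_iff.mpr
      rw [mul_div_assoc'] -- δ * (A / L) = (δ * A) / L
      apply (div_le_div_iff_of_pos_right hLpos).mpr
      rw [Real.log_inv]
      linarith [hloggm]
    have htend : Tendsto
        (fun m : ℕ => ((δ * ((Real.log m - Real.log 4) / Real.log ((m:ℝ)+1)) : ℝ) : EReal))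
        atTop (nhds (δ : EReal)) := by
      rw [EReal.tendsto_coe]
      simpa using (aux_ratio_tendsto (Real.log 4)).const_mul δ
    calc (δ : EReal)
        = liminf (fun m : ℕ =>
            ((δ * ((Real.log m - Real.log 4) / Real.log ((m:ℝ)+1)) : ℝ) : EReal)) atTop :=
          htend.liminf_eq.symm
      _ ≤ liminf f atTop := liminf_le_liminf hev
  · -- liminf ≤ rGamma
    by_contra hlt
    rw [not_le] at hlt
    obtain ⟨δ, hrδ, hδL⟩ := EReal.exists_between_coe_real hlt
    have hδpos : (0:ℝ) < δ := EReal.coe_pos.1 (hr.trans hrδ)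
    obtain ⟨δ', hδδ', hδ'L⟩ := EReal.exists_between_coe_real hδL
    have hδδ'R : δ < δ' := EReal.coe_lt_coe_iff.1 hδδ'
    set p : ℝ := δ'/δ with hp
    have hp1 : 1 < p := (one_lt_div hδpos).mpr hδδ'R
    have hev : ∀ᶠ j : ℕ in atTop, (δ' : EReal) < f j :=
      eventually_lt_of_lt_liminf hδ'L
    obtain ⟨N, hN⟩ := eventually_atTop.1 (hev.and (eventually_ge_atTop 1))
    have hbig : Summable (fun j : ℕ => ((j:ℝ)+1) ^ (-p)) := by
      have h0 : Summable (fun j : ℕ => (j:ℝ) ^ (-p)) :=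
        Real.summable_nat_rpow.mpr (by linarith)
      have h1 := (summable_nat_add_iff 1).mpr h0
      refine h1.congr fun j => ?_
      push_cast
      ring_nf
    have hsum : Summable (fun j : ℕ => g j ^ (1/δ)) := by
      apply (summable_nat_add_iff N).1
      apply Summable.of_nonneg_of_le (fun j => Real.rpow_nonneg (hpos _).le _)
        ?_ ((summable_nat_add_iff N).mpr hbig)
      intro j
      obtain ⟨hfj, hm1⟩ := hN (j+N) (Nat.le_add_left N j)
      set m := j + N with hm
      have hLpos : 0 < Real.log ((m:ℝ)+1) := by
        apply Real.log_pos
        have : (1:ℝ) ≤ (m:ℝ) := by exact_mod_cast hm1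
        linarith
      have hfjR : δ' < Real.log (g m)⁻¹ / Real.log ((m:ℝ)+1) := by
        simp only [hf] at hfj
        exact EReal.coe_lt_coe_iff.1 hfj
      have hlog : Real.log (g m) < Real.log (((m:ℝ)+1) ^ (-δ')) := by
        rw [Real.log_rpow (by positivity), Real.log_inv] at *
        rw [lt_div_iff₀ hLpos] at hfjR
        linarith
      have hgm : g m < ((m:ℝ)+1) ^ (-δ') :=
        (Real.log_lt_log_iff (hpos m) (by positivity)).1 hlog
      have h1 : g m ^ (1/δ) ≤ (((m:ℝ)+1) ^ (-δ')) ^ (1/δ) :=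
        Real.rpow_le_rpow (hpos m).le hgm.le (by positivity)
      refine h1.trans_eq ?_
      rw [← Real.rpow_mul (by positivity)]
      congr 1
      rw [hp]; field_simp [hδpos.ne']
    have hmem : (δ : EReal) ∈
        {x : EReal | ∃ δ : ℝ, 0 < δ ∧ Summable (fun j : ℕ => g j ^ (1 / δ)) ∧ x = (δ : EReal)} :=
      ⟨δ, hδpos, hsum, rfl⟩
    exact absurd (le_sSup hmem) (not_le.mpr hrδ)
end

section
/- Let γ = (γ_j²)_{j≥1} be a nonincreasing sequence of positive reals. The following are equivalent: (a) liminf_{j→∞} (ln γ_j^{−2} / ln j) ≥ 1; (b) for every t ∈ (0,1), lim_{j→∞} j^{1−t} γ_j² ln⁺(γ_j^{−2}) = 0; (c) for every t ∈ (0,1), lim_{j→∞} j^{1−t} γ_j² = 0. -/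
open Filter


lemma aux_tendsto (a : ℝ) (ha : 0 < a) :
    Tendsto (fun j : ℕ => ((j:ℝ)+1) ^ (-a)) atTop (nhds 0) :=
  (tendsto_rpow_neg_atTop ha).comp
    (tendsto_atTop_add_const_right _ 1 tendsto_natCast_atTop_atTop)

lemma aux_xlog (x : ℝ) (hx : 0 < x) : x * Real.log x⁻¹ ≤ 1 := by
  calc x * Real.log x⁻¹ ≤ x * x⁻¹ := by
        apply mul_le_mul_of_nonneg_left _ hx.le
        have := Real.log_le_sub_one_of_pos (inv_pos.2 hx)
        linarith
    _ = 1 := mul_inv_cancel₀ hx.ne'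

lemma aux_ab (g : ℕ → ℝ) (hpos : ∀ j, 0 < g j)
    (ha : 1 ≤ Filter.liminf
        (fun j : ℕ => ((Real.log (g j)⁻¹ / Real.log ((j : ℝ) + 1) : ℝ) : EReal))
        Filter.atTop)
    (t : ℝ) (ht0 : 0 < t) (ht1 : t < 1) :
    Tendsto (fun j : ℕ => ((j : ℝ) + 1) ^ (1 - t) * g j * max 1 (Real.log (g j)⁻¹))
      atTop (nhds 0) := by
  set c : ℝ := 1 - t/4 with hc
  set δ : ℝ := t/4 with hδ
  have hc0 : 0 < c := by rw [hc]; linarith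
  have hδ0 : 0 < δ := by rw [hδ]; linarith
  have hclt : ((c : ℝ) : EReal) < Filter.liminf
      (fun j : ℕ => ((Real.log (g j)⁻¹ / Real.log ((j : ℝ) + 1) : ℝ) : EReal)) atTop := by
    refine lt_of_lt_of_le ?_ ha
    rw [show (1 : EReal) = ((1:ℝ) : EReal) by norm_cast]
    exact_mod_cast show c < (1:ℝ) by rw [hc]; linarith
  have hev : ∀ᶠ j : ℕ in atTop,
      ((c : ℝ) : EReal) < ((Real.log (g j)⁻¹ / Real.log ((j : ℝ) + 1) : ℝ) : EReal) :=
    Filter.eventually_lt_of_lt_liminf hclt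
  -- key bound eventually
  have hbound : ∀ᶠ j : ℕ in atTop,
      ((j : ℝ) + 1) ^ (1 - t) * g j * max 1 (Real.log (g j)⁻¹) ≤
        ((j:ℝ)+1) ^ (-(3*t/4)) + (1/δ) * ((j:ℝ)+1) ^ (-(t/2 + t^2/16)) := by
    filter_upwards [hev, eventually_ge_atTop 1] with j hj hj1
    have hjR : (1:ℝ) < (j:ℝ) + 1 := by
      have : (1:ℝ) ≤ (j:ℝ) := by exact_mod_cast hj1
      linarith
    have hlogpos : 0 < Real.log ((j:ℝ)+1) := Real.log_pos hjR
    have hratio : c < Real.log (g j)⁻¹ / Real.log ((j:ℝ)+1) := by exact_mod_cast hj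
    have hlog : c * Real.log ((j:ℝ)+1) < Real.log (g j)⁻¹ :=
      (lt_div_iff₀ hlogpos).mp hratio
    have hginv : ((j:ℝ)+1) ^ c < (g j)⁻¹ := by
      have h1 : Real.exp (c * Real.log ((j:ℝ)+1)) < Real.exp (Real.log (g j)⁻¹) :=
        Real.exp_lt_exp.2 hlog
      rw [mul_comm] at h1
      rwa [Real.exp_log (inv_pos.2 (hpos j)), ← Real.rpow_def_of_pos (by linarith : (0:ℝ) < (j:ℝ)+1)] at h1
    have hg_lt : g j < ((j:ℝ)+1) ^ (-c) := by
      rw [Real.rpow_neg (by linarith : (0:ℝ) ≤ (j:ℝ)+1)]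
      have hp : 0 < ((j:ℝ)+1) ^ c := Real.rpow_pos_of_pos (by linarith) c
      rw [← inv_inv (g j)]
      exact inv_strictAnti₀ hp hginv
    have hg1 : g j < 1 := by
      refine hg_lt.trans_le ?_
      calc ((j:ℝ)+1) ^ (-c) ≤ ((j:ℝ)+1) ^ (0:ℝ) :=
            Real.rpow_le_rpow_of_exponent_le hjR.le (by linarith)
        _ = 1 := Real.rpow_zero _
    have hLpos : 0 ≤ Real.log (g j)⁻¹ := by
      rw [Real.log_inv]
      have := Real.log_nonpos (hpos j).le hg1.le
      linarith
    have hmax : max 1 (Real.log (g j)⁻¹) ≤ 1 + Real.log (g j)⁻¹ := by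
      apply max_le <;> linarith
    have hjpos : (0:ℝ) < (j:ℝ)+1 := by linarith
    have hP : (0:ℝ) ≤ ((j:ℝ)+1) ^ (1-t) := (Real.rpow_pos_of_pos hjpos _).le
    -- term 1
    have hterm1 : ((j:ℝ)+1) ^ (1-t) * g j ≤ ((j:ℝ)+1) ^ (-(3*t/4)) := by
      calc ((j:ℝ)+1) ^ (1-t) * g j ≤ ((j:ℝ)+1) ^ (1-t) * ((j:ℝ)+1) ^ (-c) :=
            mul_le_mul_of_nonneg_left hg_lt.le hP
        _ = ((j:ℝ)+1) ^ ((1-t) + (-c)) := (Real.rpow_add hjpos _ _).symm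
        _ = ((j:ℝ)+1) ^ (-(3*t/4)) := by rw [hc, hδ]; ring_nf
    -- g j * log (g j)⁻¹ ≤ g j ^ (1-δ) / δ
    have hglog : g j * Real.log (g j)⁻¹ ≤ g j ^ (1-δ) * (1/δ) := by
      have hsplit : g j * Real.log (g j)⁻¹ =
          g j ^ (1-δ) * (g j ^ δ * Real.log (g j)⁻¹) := by
        rw [← mul_assoc, ← Real.rpow_add (hpos j)]
        norm_num
      rw [hsplit]
      apply mul_le_mul_of_nonneg_left _ (Real.rpow_pos_of_pos (hpos j) _).le
      have hx := aux_xlog (g j ^ δ) (Real.rpow_pos_of_pos (hpos j) δ)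
      have hlogeq : Real.log ((g j ^ δ)⁻¹) = δ * Real.log (g j)⁻¹ := by
        rw [Real.log_inv, Real.log_rpow (hpos j), Real.log_inv]; ring
      rw [hlogeq] at hx
      rw [div_eq_mul_inv, one_mul] at *
      have : g j ^ δ * Real.log (g j)⁻¹ ≤ δ⁻¹ := by
        rw [← mul_le_mul_iff_right₀ hδ0]
        calc δ * (g j ^ δ * Real.log (g j)⁻¹) = g j ^ δ * (δ * Real.log (g j)⁻¹) := by ring
          _ ≤ 1 := hx
          _ = δ * δ⁻¹ := (mul_inv_cancel₀ hδ0.ne').symm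
      simpa using this
    have hterm2 : ((j:ℝ)+1) ^ (1-t) * (g j * Real.log (g j)⁻¹) ≤
        (1/δ) * ((j:ℝ)+1) ^ (-(t/2 + t^2/16)) := by
      calc ((j:ℝ)+1) ^ (1-t) * (g j * Real.log (g j)⁻¹)
          ≤ ((j:ℝ)+1) ^ (1-t) * (g j ^ (1-δ) * (1/δ)) :=
            mul_le_mul_of_nonneg_left hglog hP
        _ ≤ ((j:ℝ)+1) ^ (1-t) * ((((j:ℝ)+1) ^ (-c)) ^ (1-δ) * (1/δ)) := by
            apply mul_le_mul_of_nonneg_left _ hP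
            apply mul_le_mul_of_nonneg_right _ (by positivity)
            exact Real.rpow_le_rpow (hpos j).le hg_lt.le (by rw [hδ]; linarith)
        _ = (1/δ) * (((j:ℝ)+1) ^ (1-t) * ((j:ℝ)+1) ^ ((-c) * (1-δ))) := by
            rw [← Real.rpow_mul hjpos.le]; ring
        _ = (1/δ) * ((j:ℝ)+1) ^ ((1-t) + (-c) * (1-δ)) := by
            rw [← Real.rpow_add hjpos]
        _ = (1/δ) * ((j:ℝ)+1) ^ (-(t/2 + t^2/16)) := by
            congr 1
            rw [hc, hδ]; ring
    calc ((j:ℝ)+1) ^ (1-t) * g j * max 1 (Real.log (g j)⁻¹)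
        ≤ ((j:ℝ)+1) ^ (1-t) * g j * (1 + Real.log (g j)⁻¹) := by
          have hgj := hpos j
          apply mul_le_mul_of_nonneg_left hmax (by positivity)
      _ = ((j:ℝ)+1) ^ (1-t) * g j + ((j:ℝ)+1) ^ (1-t) * (g j * Real.log (g j)⁻¹) := by ring
      _ ≤ ((j:ℝ)+1) ^ (-(3*t/4)) + (1/δ) * ((j:ℝ)+1) ^ (-(t/2 + t^2/16)) :=
          add_le_add hterm1 hterm2
  -- squeeze
  have hupper : Tendsto (fun j : ℕ =>
      ((j:ℝ)+1) ^ (-(3*t/4)) + (1/δ) * ((j:ℝ)+1) ^ (-(t/2 + t^2/16))) atTop (nhds 0) := by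
    have h1 := aux_tendsto (3*t/4) (by linarith)
    have h2 := (aux_tendsto (t/2 + t^2/16) (by nlinarith)).const_mul (1/δ)
    simpa using h1.add h2
  refine tendsto_of_tendsto_of_tendsto_of_le_of_le' tendsto_const_nhds hupper ?_ hbound
  filter_upwards with j
  have := hpos j
  positivity


lemma aux_bc (g : ℕ → ℝ) (hpos : ∀ j, 0 < g j)
    (hb : ∀ t : ℝ, 0 < t → t < 1 →
        Filter.Tendsto
          (fun j : ℕ => ((j : ℝ) + 1) ^ (1 - t) * g j * max 1 (Real.log (g j)⁻¹))
          Filter.atTop (nhds 0))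
    (t : ℝ) (ht0 : 0 < t) (ht1 : t < 1) :
    Tendsto (fun j : ℕ => ((j : ℝ) + 1) ^ (1 - t) * g j) atTop (nhds 0) := by
  refine squeeze_zero (fun j => ?_) (fun j => ?_) (hb t ht0 ht1)
  · have hjpos : (0:ℝ) < (j:ℝ)+1 := by positivity
    have := hpos j
    positivity
  · have hjpos : (0:ℝ) < (j:ℝ)+1 := by positivity
    have hgj := hpos j
    exact le_mul_of_one_le_right (by positivity) (le_max_left _ _)

lemma aux_ca (g : ℕ → ℝ) (hpos : ∀ j, 0 < g j)
    (hcc : ∀ t : ℝ, 0 < t → t < 1 →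
        Filter.Tendsto (fun j : ℕ => ((j : ℝ) + 1) ^ (1 - t) * g j)
          Filter.atTop (nhds 0)) :
    1 ≤ Filter.liminf
        (fun j : ℕ => ((Real.log (g j)⁻¹ / Real.log ((j : ℝ) + 1) : ℝ) : EReal))
        Filter.atTop := by
  by_contra hlt
  push_neg at hlt
  obtain ⟨c0, hc0l, hc0r⟩ := EReal.exists_between_coe_real hlt
  set c : ℝ := max c0 (1/2) with hc
  have hc1 : c < 1 := by
    have : c0 < 1 := by exact_mod_cast (by exact_mod_cast hc0r : ((c0:ℝ):EReal) < ((1:ℝ):EReal))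
    rw [hc]; exact max_lt this (by norm_num)
  have hchalf : (1/2 : ℝ) ≤ c := le_max_right _ _
  have hliminf_c : Filter.liminf
      (fun j : ℕ => ((Real.log (g j)⁻¹ / Real.log ((j : ℝ) + 1) : ℝ) : EReal)) atTop
      < ((c:ℝ) : EReal) := lt_of_lt_of_le hc0l (by exact_mod_cast le_max_left c0 (1/2))
  have hfreq : ∃ᶠ j : ℕ in atTop,
      ((Real.log (g j)⁻¹ / Real.log ((j : ℝ) + 1) : ℝ) : EReal) < ((c:ℝ):EReal) :=
    Filter.frequently_lt_of_liminf_lt (by isBoundedDefault) hliminf_c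
  set t : ℝ := (1 - c) / 2 with ht
  have ht0 : 0 < t := by rw [ht]; linarith
  have ht1 : t < 1 := by rw [ht]; linarith
  have htend := hcc t ht0 ht1
  have hev : ∀ᶠ j : ℕ in atTop, ((j : ℝ) + 1) ^ (1 - t) * g j < 1 :=
    (htend.eventually (eventually_lt_nhds (by norm_num : (0:ℝ) < 1)))
  have hfreq2 : ∃ᶠ j : ℕ in atTop,
      (1:ℝ) ≤ ((j : ℝ) + 1) ^ (1 - t) * g j := by
    refine (hfreq.and_eventually (eventually_ge_atTop 1)).mono ?_
    rintro j ⟨hj, hj1⟩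
    have hjR : (1:ℝ) < (j:ℝ)+1 := by
      have : (1:ℝ) ≤ (j:ℝ) := by exact_mod_cast hj1
      linarith
    have hjpos : (0:ℝ) < (j:ℝ)+1 := by linarith
    have hlogpos : 0 < Real.log ((j:ℝ)+1) := Real.log_pos hjR
    have hratio : Real.log (g j)⁻¹ / Real.log ((j:ℝ)+1) < c := by exact_mod_cast hj
    have hlog : Real.log (g j)⁻¹ < c * Real.log ((j:ℝ)+1) :=
      (div_lt_iff₀ hlogpos).mp hratio
    have hginv : (g j)⁻¹ < ((j:ℝ)+1) ^ c := by
      have h1 : Real.exp (Real.log (g j)⁻¹) < Real.exp (c * Real.log ((j:ℝ)+1)) :=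
        Real.exp_lt_exp.2 hlog
      rw [mul_comm] at h1
      rwa [Real.exp_log (inv_pos.2 (hpos j)), ← Real.rpow_def_of_pos hjpos] at h1
    have hg_gt : ((j:ℝ)+1) ^ (-c) < g j := by
      rw [Real.rpow_neg hjpos.le]
      have hp : 0 < ((j:ℝ)+1) ^ c := Real.rpow_pos_of_pos hjpos c
      rw [← inv_inv (g j)]
      exact inv_strictAnti₀ (inv_pos.2 (hpos j)) hginv
    calc (1:ℝ) = ((j:ℝ)+1) ^ (0:ℝ) := (Real.rpow_zero _).symm
      _ ≤ ((j:ℝ)+1) ^ ((1 - t) + (-c)) := by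
          apply Real.rpow_le_rpow_of_exponent_le hjR.le
          rw [ht]; linarith
      _ = ((j:ℝ)+1) ^ (1-t) * ((j:ℝ)+1) ^ (-c) := Real.rpow_add hjpos _ _
      _ ≤ ((j:ℝ)+1) ^ (1-t) * g j :=
          mul_le_mul_of_nonneg_left hg_gt.le (Real.rpow_pos_of_pos hjpos _).le
  obtain ⟨j, hj1, hj2⟩ := (hfreq2.and_eventually hev).exists
  linarith

/-- For a nonincreasing sequence `g j = γ_{j+1}² > 0`, the following are equivalent:
(a) `liminf_j ln γ_j⁻² / ln j ≥ 1`;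
(b) for every `t ∈ (0,1)`, `lim_j j^{1-t} γ_j² ln⁺(γ_j⁻²) = 0`;
(c) for every `t ∈ (0,1)`, `lim_j j^{1-t} γ_j² = 0`. -/
theorem stmt13 (g : ℕ → ℝ) (hpos : ∀ j, 0 < g j) (hanti : Antitone g) :
    ((1 ≤ Filter.liminf
        (fun j : ℕ => ((Real.log (g j)⁻¹ / Real.log ((j : ℝ) + 1) : ℝ) : EReal))
        Filter.atTop) ↔
      (∀ t : ℝ, 0 < t → t < 1 →
        Filter.Tendsto
          (fun j : ℕ => ((j : ℝ) + 1) ^ (1 - t) * g j * max 1 (Real.log (g j)⁻¹))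
          Filter.atTop (nhds 0))) ∧
    ((∀ t : ℝ, 0 < t → t < 1 →
        Filter.Tendsto
          (fun j : ℕ => ((j : ℝ) + 1) ^ (1 - t) * g j * max 1 (Real.log (g j)⁻¹))
          Filter.atTop (nhds 0)) ↔
      (∀ t : ℝ, 0 < t → t < 1 →
        Filter.Tendsto (fun j : ℕ => ((j : ℝ) + 1) ^ (1 - t) * g j)
          Filter.atTop (nhds 0))) := by
  constructor
  · constructor
    · intro ha t ht0 ht1
      exact aux_ab g hpos ha t ht0 ht1
    · intro hb
      exact aux_ca g hpos (fun t h1 h2 => aux_bc g hpos hb t h1 h2)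
  · constructor
    · intro hb t ht0 ht1
      exact aux_bc g hpos hb t ht0 ht1
    · intro hc t ht0 ht1
      exact aux_ab g hpos (aux_ca g hpos hc) t ht0 ht1
end

section
/- For every s > 0, the function f(x) = ln((1 − x^{1+s}) / (1 − x)^{1+s}) is strictly increasing on the interval (0,1). -/
open Real Set

lemma aux16 (s : ℝ) (hs : 0 < s) :
    StrictMonoOn (fun x : ℝ => Real.log (1 - x ^ (1 + s)) - (1 + s) * Real.log (1 - x))
      (Set.Ioo (0 : ℝ) 1) := by
  have h1s : (0:ℝ) < 1 + s := by linarith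
  apply strictMonoOn_of_hasDerivWithinAt_pos (convex_Ioo 0 1)
    (f' := fun x => (1+s) * (1 - x ^ s) / ((1 - x ^ (1+s)) * (1 - x)))
  · -- continuity
    apply ContinuousOn.sub
    · apply ContinuousOn.log
      · exact (continuousOn_const.sub (continuousOn_id.rpow_const (fun x hx => Or.inr h1s.le)))
      · intro x hx
        have hx1 : x ^ (1+s) < 1 := Real.rpow_lt_one hx.1.le hx.2 h1s
        linarith
    · apply ContinuousOn.mul continuousOn_const
      apply ContinuousOn.log (continuousOn_const.sub continuousOn_id)
      intro x hx; exact (show (0:ℝ) < 1 - x by linarith [hx.2]).ne'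
  · rw [interior_Ioo]
    intro x hx
    obtain ⟨hx0, hx1⟩ := hx
    have hxs : x ^ s < 1 := Real.rpow_lt_one hx0.le hx1 hs
    have hx1s : x ^ (1+s) < 1 := Real.rpow_lt_one hx0.le hx1 h1s
    have h1 : (0:ℝ) < 1 - x ^ (1+s) := by linarith
    have h2 : (0:ℝ) < 1 - x := by linarith
    have hd1 : HasDerivAt (fun x : ℝ => Real.log (1 - x ^ (1+s)))
        (-((1+s) * x ^ s) / (1 - x ^ (1+s))) x := by
      have hpow : HasDerivAt (fun x : ℝ => x ^ (1+s)) ((1+s) * x ^ ((1+s)-1)) x :=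
        Real.hasDerivAt_rpow_const (Or.inl hx0.ne')
      have hsub : HasDerivAt (fun x : ℝ => 1 - x ^ (1+s)) (-((1+s) * x ^ ((1+s)-1))) x := by
        simpa using hpow.const_sub (1:ℝ)
      have := hsub.log h1.ne'
      simpa [add_sub_cancel_left] using this
    have hd2 : HasDerivAt (fun x : ℝ => (1+s) * Real.log (1 - x))
        ((1+s) * (-1 / (1 - x))) x := by
      have hsub : HasDerivAt (fun x : ℝ => 1 - x) (-1) x := by
        simpa using (hasDerivAt_id x).const_sub (1:ℝ)
      exact (hsub.log h2.ne').const_mul (1+s)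
    have key : -((1+s) * x ^ s) / (1 - x ^ (1+s)) - (1+s) * (-1 / (1 - x))
        = (1+s) * (1 - x ^ s) / ((1 - x ^ (1+s)) * (1 - x)) := by
      field_simp
      have hx1s' : x ^ (1+s) = x * x ^ s := by
        rw [Real.rpow_add hx0, Real.rpow_one]
      rw [hx1s']; ring
    have := (hd1.sub hd2).hasDerivWithinAt (s := Set.Ioo (0:ℝ) 1)
    rw [key] at this
    exact this
  · rw [interior_Ioo]
    intro x hx
    obtain ⟨hx0, hx1⟩ := hx
    have hxs : x ^ s < 1 := Real.rpow_lt_one hx0.le hx1 hs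
    have hx1s : x ^ (1+s) < 1 := Real.rpow_lt_one hx0.le hx1 h1s
    have h1 : (0:ℝ) < 1 - x ^ (1+s) := by linarith
    have h2 : (0:ℝ) < 1 - x := by linarith
    have h3 : (0:ℝ) < 1 - x ^ s := by linarith
    positivity

/-- For every `s > 0`, `x ↦ ln((1 - x^{1+s})/(1-x)^{1+s})` is strictly increasing on `(0,1)`. -/
theorem stmt16 (s : ℝ) (hs : 0 < s) :
    StrictMonoOn (fun x : ℝ => Real.log ((1 - x ^ (1 + s)) / (1 - x) ^ (1 + s)))
      (Set.Ioo (0 : ℝ) 1) := by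
  have h1s : (0:ℝ) < 1 + s := by linarith
  apply StrictMonoOn.congr (aux16 s hs)
  intro x hx
  obtain ⟨hx0, hx1⟩ := hx
  have hx1s : x ^ (1+s) < 1 := Real.rpow_lt_one hx0.le hx1 h1s
  have h1 : (0:ℝ) < 1 - x ^ (1+s) := by linarith
  have h2 : (0:ℝ) < 1 - x := by linarith
  simp only
  rw [Real.log_div h1.ne' (by positivity), Real.log_rpow h2]
end
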